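/- Let G be a connected finite simple undirected graph on vertex set V, let S ⊆ V be a nonempty set of grounded nodes with complement F = V \ S nonempty, and let L_g be the grounded Laplacian. For each i ∈ F let β_i = |N_i ∩ S| be the number of grounded nodes adjacent to i, and let ∂S be the set of edges of G with exactly one endpoint in S. Then the smallest eigenvalue λ_1(L_g) satisfies the chain of inequalities: min_{i∈F} β_i ≤ λ_1(L_g) ≤ |∂S|/|F| ≤ max_{i∈F} β_i ≤ |S|. -/

import Mathlib

open scoped Matrix

section AuxHelpers

variable {n : Type*} [Fintype n] [DecidableEq n]

private lemma eigvec_dot_self {A : Matrix n n ℝ} (hA : A.IsHermitian) (i : n) :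
    dotProduct ⇑(hA.eigenvectorBasis i) ⇑(hA.eigenvectorBasis i) = 1 := by
  have h : (inner ℝ (hA.eigenvectorBasis i) (hA.eigenvectorBasis i) : ℝ) = 1 := by
    rw [real_inner_self_eq_norm_sq, hA.eigenvectorBasis.orthonormal.1 i]
    norm_num
  rw [← h, PiLp.inner_apply]
  simp [dotProduct, pow_two]

private lemma le_eigenvalues_of_quadform {A : Matrix n n ℝ} (hA : A.IsHermitian) {c : ℝ}
    (h : ∀ x : n → ℝ, c * dotProduct x x ≤ dotProduct x (A *ᵥ x)) (j : n) :
    c ≤ hA.eigenvalues j := by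
  have he := hA.eigenvalues_eq j
  have h2 := h ⇑(hA.eigenvectorBasis j)
  rw [eigvec_dot_self hA j, mul_one] at h2
  simpa [he] using h2

private lemma iInf_eigenvalues_mul_le_quadform [Nonempty n] {A : Matrix n n ℝ}
    (hA : A.IsHermitian) (x : n → ℝ) :
    (⨅ j, hA.eigenvalues j) * dotProduct x x ≤ dotProduct x (A *ᵥ x) := by
  classical
  set U : Matrix n n ℝ := (hA.eigenvectorUnitary : Matrix n n ℝ) with hU
  have hstar : star U = Uᵀ := by
    rw [Matrix.star_eq_conjTranspose, Matrix.conjTranspose_eq_transpose_of_trivial]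
  set y : n → ℝ := Uᵀ *ᵥ x with hy
  set D : Matrix n n ℝ := Matrix.diagonal (RCLike.ofReal ∘ hA.eigenvalues) with hD
  have hUU : U * star U = 1 := (Matrix.mem_unitaryGroup_iff).mp hA.eigenvectorUnitary.2
  have hyy : dotProduct y y = dotProduct x x := by
    calc dotProduct y y = dotProduct (x ᵥ* U) (Uᵀ *ᵥ x) := by
          rw [hy, Matrix.mulVec_transpose]
    _ = dotProduct x (U *ᵥ (Uᵀ *ᵥ x)) := (Matrix.dotProduct_mulVec _ _ _).symm
    _ = dotProduct x ((U * Uᵀ) *ᵥ x) := by rw [Matrix.mulVec_mulVec]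
    _ = dotProduct x x := by rw [← hstar, hUU, Matrix.one_mulVec]
  have hAx : dotProduct x (A *ᵥ x) = dotProduct y (D *ᵥ y) := by
    calc dotProduct x (A *ᵥ x) = dotProduct x ((U * D * star U) *ᵥ x) := by
          conv_lhs => rw [hA.spectral_theorem, Unitary.conjStarAlgAut_apply]
    _ = dotProduct x (U *ᵥ (D *ᵥ (star U *ᵥ x))) := by
          rw [← Matrix.mulVec_mulVec, ← Matrix.mulVec_mulVec]
    _ = dotProduct (x ᵥ* U) (D *ᵥ (star U *ᵥ x)) := Matrix.dotProduct_mulVec _ _ _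
    _ = dotProduct y (D *ᵥ y) := by rw [hstar, hy, Matrix.mulVec_transpose]
  rw [hAx, ← hyy]
  have hDy : dotProduct y (D *ᵥ y) = ∑ i, hA.eigenvalues i * (y i * y i) := by
    simp only [dotProduct, hD, Matrix.mulVec_diagonal, Function.comp]
    exact Finset.sum_congr rfl fun i _ => by simp [RCLike.ofReal_real_eq_id]; ring
  rw [hDy, dotProduct, Finset.mul_sum]
  apply Finset.sum_le_sum
  intro i _
  exact mul_le_mul_of_nonneg_right (ciInf_le (Finite.bddBelow_range _) i) (mul_self_nonneg _)

end AuxHelpers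

/-- The grounded Laplacian: the principal submatrix of the Laplacian of `G`
obtained by deleting the rows and columns indexed by the grounded set `S`. -/
noncomputable def groundedLaplacian {V : Type*} [Fintype V] [DecidableEq V]
    (G : SimpleGraph V) [DecidableRel G.Adj] (S : Finset V) :
    Matrix {v : V // v ∉ S} {v : V // v ∉ S} ℝ :=
  (G.lapMatrix ℝ).submatrix (fun i => (i : V)) (fun j => (j : V))

/-- The number of edges of `G` with exactly one endpoint in `S` (each such edge is counted
once, via its ordered representative `(i, j)` with `i ∈ S` and `j ∉ S`). -/
def edgeBoundaryCard {V : Type*} [Fintype V] [DecidableEq V]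
    (G : SimpleGraph V) [DecidableRel G.Adj] (S : Finset V) : ℕ :=
  (Finset.univ.filter (fun p : V × V => p.1 ∈ S ∧ p.2 ∉ S ∧ G.Adj p.1 p.2)).card

section AuxCount
variable {V : Type*} [Fintype V] [DecidableEq V] (G : SimpleGraph V) [DecidableRel G.Adj]
  (S : Finset V)

private lemma edge_count : edgeBoundaryCard G S = ∑ j ∈ Sᶜ, (G.neighborFinset j ∩ S).card := by
  unfold edgeBoundaryCard
  rw [Finset.card_filter, Fintype.sum_prod_type, Finset.sum_comm]
  have h1 : ∀ j : V, (∑ i : V, if (i ∈ S ∧ j ∉ S ∧ G.Adj i j) then 1 else 0)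
      = if j ∈ Sᶜ then (G.neighborFinset j ∩ S).card else 0 := by
    intro j
    by_cases hj : j ∈ S
    · simp [hj]
    · have hset : G.neighborFinset j ∩ S = Finset.univ.filter (fun i => i ∈ S ∧ G.Adj i j) := by
        ext i; simp [G.adj_comm, and_comm]
      rw [if_pos (Finset.mem_compl.mpr hj), hset, Finset.card_filter]
      exact Finset.sum_congr rfl fun i _ => by simp [hj]
  rw [Finset.sum_congr rfl (fun j _ => h1 j), Finset.sum_ite_mem, Finset.univ_inter]

private lemma lap_row_sum (i : V) : (∑ j : V, G.lapMatrix ℝ i j) = 0 := by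
  have h := congrFun (G.lapMatrix_mulVec_const_eq_zero (R := ℝ)) i
  simpa [Matrix.mulVec, dotProduct] using h

private lemma lap_row_sum_S {i : V} (hi : i ∉ S) :
    (∑ j ∈ S, G.lapMatrix ℝ i j) = -((G.neighborFinset i ∩ S).card : ℝ) := by
  have h : ∀ j ∈ S, G.lapMatrix ℝ i j = -(if G.Adj i j then (1:ℝ) else 0) := by
    intro j hj
    have hne : i ≠ j := fun h => hi (h ▸ hj)
    simp [SimpleGraph.lapMatrix, SimpleGraph.degMatrix, Matrix.diagonal_apply_ne _ hne]
  rw [Finset.sum_congr rfl h, Finset.sum_neg_distrib]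
  congr 1
  rw [Finset.sum_boole]
  congr 1
  rw [Finset.inter_comm]
  congr 1
  ext j; simp

end AuxCount

/-- chain of bounds on the smallest eigenvalue of the grounded Laplacian:
`min_{i∈F} β_i ≤ λ₁(L_g) ≤ |∂S|/|F| ≤ max_{i∈F} β_i ≤ |S|`, where `β_i = |N_i ∩ S|`. -/
theorem groundedLaplacian_smallest_eigenvalue_bounds {V : Type*} [Fintype V] [DecidableEq V]
    (G : SimpleGraph V) [DecidableRel G.Adj] (hconn : G.Connected)
    (S : Finset V) (hS : S.Nonempty) (hF : Sᶜ.Nonempty)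
    (hsym : (groundedLaplacian G S).IsHermitian) :
    Sᶜ.inf' hF (fun i => ((G.neighborFinset i ∩ S).card : ℝ)) ≤ (⨅ j, hsym.eigenvalues j) ∧
    (⨅ j, hsym.eigenvalues j) ≤ (edgeBoundaryCard G S : ℝ) / (Sᶜ.card : ℝ) ∧
    (edgeBoundaryCard G S : ℝ) / (Sᶜ.card : ℝ)
      ≤ Sᶜ.sup' hF (fun i => ((G.neighborFinset i ∩ S).card : ℝ)) ∧
    Sᶜ.sup' hF (fun i => ((G.neighborFinset i ∩ S).card : ℝ)) ≤ (S.card : ℝ) := by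
  classical
  haveI hFne : Nonempty {v : V // v ∉ S} := by
    obtain ⟨w, hw⟩ := hF; exact ⟨⟨w, Finset.mem_compl.mp hw⟩⟩
  set β : V → ℝ := fun v => ((G.neighborFinset v ∩ S).card : ℝ) with hβ
  have hmemiff : ∀ v : V, v ∈ Sᶜ ↔ v ∉ S := fun v => Finset.mem_compl
  -- row sums of the grounded Laplacian
  have hrow : ∀ i : {v : V // v ∉ S},
      (∑ j : {v : V // v ∉ S}, groundedLaplacian G S i j) = β (i : V) := by
    intro i
    have h1 : (∑ j : {v : V // v ∉ S}, groundedLaplacian G S i j)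
        = ∑ j ∈ Sᶜ, G.lapMatrix ℝ (i : V) j :=
      (Finset.sum_subtype Sᶜ hmemiff (fun j => G.lapMatrix ℝ (i : V) j)).symm
    have h2 : (∑ j ∈ S, G.lapMatrix ℝ (i : V) j) + ∑ j ∈ Sᶜ, G.lapMatrix ℝ (i : V) j
        = ∑ j : V, G.lapMatrix ℝ (i : V) j := Finset.sum_add_sum_compl S _
    have h3 := lap_row_sum G (i : V)
    have h4 := lap_row_sum_S G S i.2
    rw [h1]
    rw [h3] at h2
    rw [h4] at h2
    simp only [hβ]
    linarith
  have htot : (∑ i : {v : V // v ∉ S}, ∑ j : {v : V // v ∉ S}, groundedLaplacian G S i j)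
      = ∑ i ∈ Sᶜ, β i := by
    rw [Finset.sum_subtype Sᶜ hmemiff β]
    exact Finset.sum_congr rfl fun i _ => hrow i
  have hedge : (edgeBoundaryCard G S : ℝ) = ∑ i ∈ Sᶜ, β i := by
    rw [edge_count G S]
    push_cast
    rfl
  have hcard0 : (0:ℝ) < (Sᶜ.card : ℝ) := by exact_mod_cast Finset.card_pos.mpr hF
  -- Part 1 : min β ≤ λ₁
  have part1 : Sᶜ.inf' hF β ≤ ⨅ j, hsym.eigenvalues j := by
    apply le_ciInf
    apply le_eigenvalues_of_quadform hsym
    intro x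
    set c := Sᶜ.inf' hF β with hc
    set xt : V → ℝ := fun v => if h : v ∈ S then 0 else x ⟨v, h⟩ with hxt
    have hxt0 : ∀ v ∈ S, xt v = 0 := fun v hv => by simp [hxt, hv]
    have hxtF : ∀ i : {v : V // v ∉ S}, xt (i : V) = x i := fun i => by simp [hxt, i.2]
    have hmul : ∀ v : V, ((G.lapMatrix ℝ) *ᵥ xt) v = ∑ w ∈ Sᶜ, G.lapMatrix ℝ v w * xt w := by
      intro v
      rw [Matrix.mulVec, dotProduct, ← Finset.sum_add_sum_compl S,
        Finset.sum_eq_zero (fun w hw => by rw [hxt0 w hw, mul_zero]), zero_add]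
    have hquad_eq : dotProduct x (groundedLaplacian G S *ᵥ x)
        = dotProduct xt (G.lapMatrix ℝ *ᵥ xt) := by
      calc dotProduct x (groundedLaplacian G S *ᵥ x)
          = ∑ i : {v : V // v ∉ S}, x i * ∑ j : {v : V // v ∉ S},
              G.lapMatrix ℝ (i : V) (j : V) * x j := rfl
      _ = ∑ i ∈ Sᶜ, xt i * ∑ w ∈ Sᶜ, G.lapMatrix ℝ i w * xt w := by
          rw [Finset.sum_subtype Sᶜ hmemiff (fun i => xt i * ∑ w ∈ Sᶜ, G.lapMatrix ℝ i w * xt w)]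
          refine Finset.sum_congr rfl fun i _ => ?_
          rw [hxtF i, Finset.sum_subtype Sᶜ hmemiff (fun w => G.lapMatrix ℝ (i : V) w * xt w)]
          congr 1
          exact Finset.sum_congr rfl fun j _ => by rw [hxtF j]
      _ = dotProduct xt (G.lapMatrix ℝ *ᵥ xt) := by
          have hzero : ∑ v ∈ S, xt v * ((G.lapMatrix ℝ *ᵥ xt) v) = 0 :=
            Finset.sum_eq_zero fun v hv => by rw [hxt0 v hv, zero_mul]
          have hsplit : dotProduct xt (G.lapMatrix ℝ *ᵥ xt)
              = ∑ v ∈ Sᶜ, xt v * ((G.lapMatrix ℝ *ᵥ xt) v) := by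
            rw [dotProduct,
              ← Finset.sum_add_sum_compl S (fun v => xt v * ((G.lapMatrix ℝ *ᵥ xt) v)),
              hzero, zero_add]
          rw [hsplit]
          exact Finset.sum_congr rfl fun v _ => by rw [hmul]
    have hform := G.lapMatrix_toLinearMap₂' (R := ℝ) xt
    rw [Matrix.toLinearMap₂'_apply'] at hform
    -- pointwise bound
    have hpt : ∀ i j : V, ((if (i ∉ S ∧ j ∈ S ∧ G.Adj i j) then xt i^2 else 0)
        + (if (i ∈ S ∧ j ∉ S ∧ G.Adj i j) then xt j^2 else 0))
        ≤ (if G.Adj i j then (xt i - xt j)^2 else 0) := by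
      intro i j
      by_cases hadj : G.Adj i j
      · rw [if_pos hadj]
        by_cases hi : i ∈ S <;> by_cases hj : j ∈ S
        · rw [if_neg (fun h => h.1 hi), if_neg (fun h => h.2.1 hj)]
          nlinarith [sq_nonneg (xt i - xt j)]
        · rw [if_neg (fun h => h.1 hi), if_pos ⟨hi, hj, hadj⟩, hxt0 i hi]
          nlinarith [sq_nonneg (xt j)]
        · rw [if_pos ⟨hi, hj, hadj⟩, if_neg (fun h => hi h.1), hxt0 j hj]
          nlinarith [sq_nonneg (xt i)]
        · rw [if_neg (fun h => hj h.2.1), if_neg (fun h => hi h.1)]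
          nlinarith [sq_nonneg (xt i - xt j)]
      · rw [if_neg hadj, if_neg (fun h => hadj h.2.2), if_neg (fun h => hadj h.2.2)]
        norm_num
    have hsum1 : (∑ i : V, ∑ j : V, if (i ∉ S ∧ j ∈ S ∧ G.Adj i j) then xt i^2 else 0)
        = ∑ i ∈ Sᶜ, β i * xt i^2 := by
      have h1 : ∀ i : V, (∑ j : V, if (i ∉ S ∧ j ∈ S ∧ G.Adj i j) then xt i^2 else 0)
          = if i ∈ Sᶜ then β i * xt i^2 else 0 := by
        intro i
        by_cases hi : i ∈ S
        · simp [hi]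
        · rw [if_pos (Finset.mem_compl.mpr hi)]
          have ht : Finset.univ.filter (fun j => i ∉ S ∧ j ∈ S ∧ G.Adj i j)
              = G.neighborFinset i ∩ S := by
            ext j; simp [hi, and_comm]
          rw [Finset.sum_ite, Finset.sum_const, Finset.sum_const_zero, add_zero, ht,
            nsmul_eq_mul, hβ]
      rw [Finset.sum_congr rfl fun i _ => h1 i, Finset.sum_ite_mem, Finset.univ_inter]
    have hsum2 : (∑ i : V, ∑ j : V, if (i ∈ S ∧ j ∉ S ∧ G.Adj i j) then xt j^2 else 0)
        = ∑ j ∈ Sᶜ, β j * xt j^2 := by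
      rw [Finset.sum_comm]
      have h1 : ∀ j : V, (∑ i : V, if (i ∈ S ∧ j ∉ S ∧ G.Adj i j) then xt j^2 else 0)
          = if j ∈ Sᶜ then β j * xt j^2 else 0 := by
        intro j
        by_cases hj : j ∈ S
        · simp [hj]
        · rw [if_pos (Finset.mem_compl.mpr hj)]
          have ht : Finset.univ.filter (fun i => i ∈ S ∧ j ∉ S ∧ G.Adj i j)
              = G.neighborFinset j ∩ S := by
            ext i; simp [hj, G.adj_comm, and_comm]
          rw [Finset.sum_ite, Finset.sum_const, Finset.sum_const_zero, add_zero, ht,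
            nsmul_eq_mul, hβ]
      rw [Finset.sum_congr rfl fun j _ => h1 j, Finset.sum_ite_mem, Finset.univ_inter]
    have hbig : ∑ i ∈ Sᶜ, β i * xt i ^2 ≤ dotProduct xt (G.lapMatrix ℝ *ᵥ xt) := by
      rw [hform, le_div_iff₀ (by norm_num : (0:ℝ) < 2)]
      calc (∑ i ∈ Sᶜ, β i * xt i^2) * 2
          = (∑ i : V, ∑ j : V, if (i ∉ S ∧ j ∈ S ∧ G.Adj i j) then xt i^2 else 0)
            + (∑ i : V, ∑ j : V, if (i ∈ S ∧ j ∉ S ∧ G.Adj i j) then xt j^2 else 0) := by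
            rw [hsum1, hsum2]; ring
      _ = ∑ i : V, ∑ j : V, ((if (i ∉ S ∧ j ∈ S ∧ G.Adj i j) then xt i^2 else 0)
            + (if (i ∈ S ∧ j ∉ S ∧ G.Adj i j) then xt j^2 else 0)) := by
            rw [← Finset.sum_add_distrib]
            exact Finset.sum_congr rfl fun i _ => (Finset.sum_add_distrib).symm
      _ ≤ ∑ i : V, ∑ j : V, if G.Adj i j then (xt i - xt j)^2 else 0 :=
            Finset.sum_le_sum fun i _ => Finset.sum_le_sum fun j _ => hpt i j
    have hdx : dotProduct x x = ∑ i ∈ Sᶜ, xt i ^ 2 := by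
      rw [Finset.sum_subtype Sᶜ hmemiff (fun i => xt i ^ 2)]
      simp only [dotProduct]
      exact Finset.sum_congr rfl fun i _ => by rw [hxtF i]; ring
    rw [hquad_eq, hdx]
    calc c * ∑ i ∈ Sᶜ, xt i ^ 2 = ∑ i ∈ Sᶜ, c * xt i ^ 2 := Finset.mul_sum _ _ _
    _ ≤ ∑ i ∈ Sᶜ, β i * xt i ^ 2 := Finset.sum_le_sum fun i hi =>
        mul_le_mul_of_nonneg_right (Finset.inf'_le β hi) (sq_nonneg _)
    _ ≤ dotProduct xt (G.lapMatrix ℝ *ᵥ xt) := hbig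
  -- Part 2 : λ₁ ≤ |∂S|/|F|
  have hcardsub : (Fintype.card {v : V // v ∉ S} : ℝ) = (Sᶜ.card : ℝ) := by
    congr 1
    rw [Fintype.card_subtype]
    congr 1
    ext v; simp
  have part2 : (⨅ j, hsym.eigenvalues j) ≤ (edgeBoundaryCard G S : ℝ) / (Sᶜ.card : ℝ) := by
    have h2 := iInf_eigenvalues_mul_le_quadform hsym (fun _ => (1:ℝ))
    have hd1 : dotProduct (fun _ : {v : V // v ∉ S} => (1:ℝ)) (fun _ => 1)
        = (Sᶜ.card : ℝ) := by
      rw [← hcardsub]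
      simp [dotProduct]
    have hq1 : dotProduct (fun _ : {v : V // v ∉ S} => (1:ℝ))
        (groundedLaplacian G S *ᵥ fun _ => 1) = ∑ i ∈ Sᶜ, β i := by
      rw [← htot]
      simp only [dotProduct, Matrix.mulVec, one_mul, mul_one]
    rw [hd1, hq1] at h2
    rw [le_div_iff₀ hcard0, hedge]
    exact h2
  -- Part 3 : |∂S|/|F| ≤ max β
  have part3 : (edgeBoundaryCard G S : ℝ) / (Sᶜ.card : ℝ) ≤ Sᶜ.sup' hF β := by
    rw [div_le_iff₀ hcard0, hedge]
    have h := Finset.sum_le_card_nsmul Sᶜ β (Sᶜ.sup' hF β) fun i hi => Finset.le_sup' β hi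
    rwa [nsmul_eq_mul, mul_comm] at h
  -- Part 4 : max β ≤ |S|
  have part4 : Sᶜ.sup' hF β ≤ (S.card : ℝ) := by
    apply Finset.sup'_le
    intro i _
    simp only [hβ]
    exact_mod_cast Finset.card_le_card (Finset.inter_subset_right)
  exact ⟨part1, part2, part3, part4⟩
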